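/- Let M be a finite monoid and P ⊆ M³, and let (T₁,σ₁,ρ₁) and (T₂,σ₂,ρ₂) be well-marked nested trees over M such that there is a marked gap-embedding h from (T₁,σ₁,ρ₁) to (T₂,σ₂,ρ₂). Then the graph interpreted from T₁ restricted to its marked leaves is an induced subgraph of the graph interpreted from T₂ restricted to its marked leaves: the restriction of h to marked leaves is an injective map preserving both adjacency and non-adjacency between the two interpreted graphs. -/

import Mathlib

namespace P2601

/-- A relation is a well-quasi-ordering if every infinite sequence admits
`i < j` with `f i ≤ f j`. -/
def IsWqo {X : Type*} (le : X → X → Prop) : Prop :=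
  ∀ f : ℕ → X, ∃ i j : ℕ, i < j ∧ le (f i) (f j)

/-- Finite rooted ordered binary trees with edge labels in `α`:
a node carries the labels of its left and right edges. -/
inductive BT (α : Type) : Type
  | leaf : BT α
  | node : α → BT α → α → BT α → BT α

namespace BT
variable {α : Type}

/-- Nodes of a tree, encoded as lists of directions from the root
(`false` = left, `true` = right). -/
def valid : BT α → List Bool → Prop
  | _, [] => True
  | .leaf, _ :: _ => False
  | .node _ l _ _, false :: p => valid l p
  | .node _ _ _ r, true :: p => valid r p

/-- Subtree rooted at a position. -/
def sub : BT α → List Bool → BT α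
  | t, [] => t
  | .leaf, _ :: _ => .leaf
  | .node _ l _ _, false :: p => sub l p
  | .node _ _ _ r, true :: p => sub r p

/-- Leaf positions. -/
def IsLeafPos (t : BT α) (p : List Bool) : Prop := t.valid p ∧ t.sub p = .leaf

/-- Product (in `M`, through the morphism determined by `μ`) of the edge
labels read along the downward path `p`. -/
def prodW {M : Type} [Monoid M] (μ : α → M) : BT α → List Bool → M
  | _, [] => 1
  | .leaf, _ :: _ => 1
  | .node a l _ _, false :: p => μ a * prodW μ l p
  | .node _ _ c r, true :: p => μ c * prodW μ r p

/-- A linear tree: every internal node has at most one non-leaf child. -/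
def IsLinear : BT α → Prop
  | .leaf => True
  | .node _ l _ r => (l = .leaf ∧ IsLinear r) ∨ (r = .leaf ∧ IsLinear l)

end BT

/-- `π_T(x,y)`: the product of the edge labels (through `μ`) along the
downward path from the node `x` to its descendant `y`. -/
def pi {α M : Type} [Monoid M] (μ : α → M) (t : BT α) (x y : List Bool) : M :=
  BT.prodW μ (t.sub x) (y.drop x.length)

/-- Strict ancestor relation on positions (strict prefix). -/
def SP (x y : List Bool) : Prop := x <+: y ∧ x ≠ y

/-- Longest common prefix: the least common ancestor of two nodes. -/
def lcp : List Bool → List Bool → List Bool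
  | a :: x, b :: y => if a = b then a :: lcp x y else []
  | _, _ => []

/-- `x` lies strictly to the left of `y` in the sibling (left-to-right) order. -/
def LeftOf (x y : List Bool) : Prop :=
  ∃ p : List Bool, (p ++ [false]) <+: x ∧ (p ++ [true]) <+: y

/-- `σ(x:y)`: the minimum split value of the nodes strictly between `x` and its
strict descendant `y`, and `N+1` if there is no such node. -/
def gap (N : ℕ) (σ : List Bool → ℕ) (x y : List Bool) : ℕ :=
  if h : (Finset.Ioo x.length y.length).Nonempty then
    (Finset.Ioo x.length y.length).inf' h (fun k => σ (y.take k))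
  else N + 1

/-- A split of height `N`: every node receives a value in `{1,…,N}`. -/
def IsSplit {α : Type} (N : ℕ) (t : BT α) (σ : List Bool → ℕ) : Prop :=
  ∀ p, t.valid p → 1 ≤ σ p ∧ σ p ≤ N

/-- `x` and `y` are `k`-neighbours: both have split value `k`, they are on a
common branch, and the split values strictly between them are `≥ k`. -/
def KNbr (N : ℕ) (σ : List Bool → ℕ) (k : ℕ) (x y : List Bool) : Prop :=
  σ x = k ∧ σ y = k ∧
    (x = y ∨ (SP x y ∧ k ≤ gap N σ x y) ∨ (SP y x ∧ k ≤ gap N σ y x))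

/-- Forward Ramseyan split. -/
def FR {α M : Type} [Monoid M] (μ : α → M) (N : ℕ) (t : BT α)
    (σ : List Bool → ℕ) : Prop :=
  ∀ k, 1 ≤ k → k ≤ N → ∀ x y x' y' : List Bool,
    t.valid x → t.valid y → t.valid x' → t.valid y' →
    KNbr N σ k x y → KNbr N σ k x x' → KNbr N σ k x y' →
    KNbr N σ k y x' → KNbr N σ k y y' → KNbr N σ k x' y' →
    SP x y → SP x' y' →
    pi μ t x y = pi μ t x y * pi μ t x' y'

/-- Gap-embedding between trees with splits: a tree embedding (preserving the
ancestor relation, least common ancestors and the sibling order) satisfying the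
root gap property and the edge gap property. -/
def IsGapEmb {α β : Type} (N : ℕ) (t₁ : BT α) (σ₁ : List Bool → ℕ)
    (t₂ : BT β) (σ₂ : List Bool → ℕ) (h : List Bool → List Bool) : Prop :=
  (∀ p, t₁.valid p → t₂.valid (h p)) ∧
  (∀ p q, t₁.valid p → t₁.valid q → h p = h q → p = q) ∧
  (∀ p q, t₁.valid p → t₁.valid q → SP p q → SP (h p) (h q)) ∧
  (∀ p q, t₁.valid p → t₁.valid q → h (lcp p q) = lcp (h p) (h q)) ∧
  (∀ p q, t₁.valid p → t₁.valid q → LeftOf p q → LeftOf (h p) (h q)) ∧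
  σ₁ [] ≤ gap N σ₂ [] (h []) ∧
  (∀ p b, t₁.valid (p ++ [b]) → σ₁ (p ++ [b]) ≤ gap N σ₂ (h p) (h (p ++ [b])))

/-- Markings of nodes. -/
inductive Mark : Type
  | marked | separating | dummy
deriving DecidableEq

/-- Well-marked nested tree condition. -/
def WellMarked {α : Type} (N : ℕ) (t : BT α) (σ : List Bool → ℕ)
    (ρ : List Bool → Mark) : Prop :=
  ρ [] = .marked ∧
  (∀ p q, t.valid p → t.valid q → ρ p = .marked → ρ q = .marked →
    ρ (lcp p q) = .marked) ∧
  (∀ k, 1 ≤ k → k ≤ N → ∀ x y z₁, t.valid x → t.valid y → t.valid z₁ →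
    ρ x = .marked → ρ y = .marked → SP x z₁ → SP z₁ y →
    k < gap N σ x z₁ → σ z₁ = k → k ≤ gap N σ z₁ y →
    ∃ z₂ z₃, t.valid z₂ ∧ t.valid z₃ ∧ SP z₁ z₂ ∧ z₂ <+: z₃ ∧ z₃ <+: y ∧
      σ z₂ = k ∧ σ z₃ = k ∧ k < gap N σ z₁ z₂ ∧ k ≤ gap N σ z₂ z₃ ∧
      k ≤ gap N σ z₃ y ∧ ρ z₁ = .marked ∧
      (ρ z₂ = .marked ∨ ρ z₂ = .separating))

/-- `z` is the closest ancestor of `x` having split value `k`. -/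
def ClosestAnc (σ : List Bool → ℕ) (k : ℕ) (x z : List Bool) : Prop :=
  z <+: x ∧ σ z = k ∧ ∀ w, w <+: x → σ w = k → w <+: z

/-- Marked gap-embedding between marked nested trees. -/
def IsMarkedGapEmb {M : Type} [Monoid M] (N : ℕ)
    (t₁ : BT M) (σ₁ : List Bool → ℕ) (ρ₁ : List Bool → Mark)
    (t₂ : BT M) (σ₂ : List Bool → ℕ) (ρ₂ : List Bool → Mark)
    (h : List Bool → List Bool) : Prop :=
  IsGapEmb N t₁ σ₁ t₂ σ₂ h ∧
  -- sends the root to the root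
  h [] = [] ∧
  -- maps leaves to leaves
  (∀ p, t₁.IsLeafPos p → t₂.IsLeafPos (h p)) ∧
  -- respects the marking
  (∀ p, t₁.valid p → ρ₁ p = ρ₂ (h p)) ∧
  -- respects local products
  (∀ p b, t₁.valid (p ++ [b]) → t₂.valid (h p ++ [b]) →
    pi id t₁ p (p ++ [b]) = pi id t₂ (h p) (h p ++ [b])) ∧
  -- respects neighbourhood products
  (∀ k, 1 ≤ k → k ≤ N → ∀ x z z', t₁.valid x →
    ClosestAnc σ₁ k x z → ClosestAnc σ₂ k (h x) z' →
    pi id t₁ z x = pi id t₂ z' (h x)) ∧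
  -- gluing on non-dummy nodes
  (∀ p b, t₁.valid (p ++ [b]) → ρ₁ (p ++ [b]) ≠ .dummy →
    ∃ b', h (p ++ [b]) = h p ++ [b'])

/-- `L`-bounded marked nested tree: every path of consecutive non-dummy nodes
has length at most `L`. -/
def LBounded {α : Type} (L : ℕ) (t : BT α) (ρ : List Bool → Mark) : Prop :=
  ∀ p q : List Bool, t.valid (p ++ q) →
    (∀ i, i ≤ q.length → ρ (p ++ q.take i) ≠ .dummy) → q.length ≤ L

/-- The edge relation of the graph interpreted from a tree by the monoid
interpretation determined by `μ` and `P ⊆ M³`. -/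
def IPEdge {α M : Type} [Monoid M] (μ : α → M) (P : Set (M × M × M))
    (t : BT α) (x y : List Bool) : Prop :=
  (LeftOf x y ∧ (pi μ t [] (lcp x y), pi μ t (lcp x y) x, pi μ t (lcp x y) y) ∈ P) ∨
  (LeftOf y x ∧ (pi μ t [] (lcp y x), pi μ t (lcp y x) y, pi μ t (lcp y x) x) ∈ P)

/-- One-hole contexts of binary trees (used to represent boughs: a bough is the
tree fragment between `b₀` and `b_n`, the hole being placed below `b_n`). -/
inductive CT (α : Type) : Type
  | hole : CT α
  | nodeL : α → CT α → α → BT α → CT α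
  | nodeR : α → BT α → α → CT α → CT α

namespace CT
variable {α : Type}

/-- Position of the hole. -/
def holePos : CT α → List Bool
  | .hole => []
  | .nodeL _ c _ _ => false :: c.holePos
  | .nodeR _ _ _ c => true :: c.holePos

/-- Plugging a tree into the hole. -/
def plug : CT α → BT α → BT α
  | .hole, s => s
  | .nodeL a c b r, s => .node a (c.plug s) b r
  | .nodeR a l b c, s => .node a l b (c.plug s)

end CT

/-- A bough of level `k`, represented by the one-hole context `c` (the hole
sits at the last backbone node `b_n`) together with its split `σ`: the root and
the hole position are backbone nodes (split value `k`), every node on the path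
from the root to the hole has split value `≥ k`, and the dimension is `≥ 1`. -/
def IsBough {α : Type} (N k : ℕ) (c : CT α) (σ : List Bool → ℕ) : Prop :=
  c.holePos ≠ [] ∧
  (∀ p, (c.plug .leaf).valid p → 1 ≤ σ p ∧ σ p ≤ N) ∧
  σ [] = k ∧ σ c.holePos = k ∧
  ∀ j, 0 < j → j < c.holePos.length → k ≤ σ (c.holePos.take j)

/-- Dimension of a bough: the number of backbone nodes below the root. -/
def boughDim {α : Type} (k : ℕ) (c : CT α) (σ : List Bool → ℕ) : ℕ :=
  ((Finset.Icc 1 c.holePos.length).filter fun j => σ (c.holePos.take j) = k).card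

/-- `j` is the depth of a backbone node of the bough. -/
def Backbone {α : Type} (k : ℕ) (c : CT α) (σ : List Bool → ℕ) (j : ℕ) : Prop :=
  j ≤ c.holePos.length ∧ σ (c.holePos.take j) = k

/-- `m` is the first idempotent value `π(b₀,b₁)` of the bough. -/
def FirstIdem {M : Type} [Monoid M] (k : ℕ) (c : CT M) (σ : List Bool → ℕ)
    (m : M) : Prop :=
  ∃ j, 0 < j ∧ j ≤ c.holePos.length ∧ σ (c.holePos.take j) = k ∧
    (∀ j', 0 < j' → j' < j → σ (c.holePos.take j') ≠ k) ∧
    m = pi id (c.plug .leaf) [] (c.holePos.take j)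

/-- A context `C[□]` in which boughs are plugged. -/
structure BCtx (M : Type) where
  cRoot : CT M
  σRoot : List Bool → ℕ
  tLeft : BT M
  σLeft : List Bool → ℕ
  tRight : BT M
  σRight : List Bool → ℕ
  mLeft : M
  mRight : M

/-- The tree `C[B]`. -/
def BCtx.plugB {M : Type} (C : BCtx M) (c : CT M) : BT M :=
  C.cRoot.plug (c.plug (BT.node C.mLeft C.tLeft C.mRight C.tRight))

/-- The split induced on `C[B]`. -/
def BCtx.plugSplit {M : Type} (C : BCtx M) (c : CT M) (σ : List Bool → ℕ) :
    List Bool → ℕ :=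
  fun p =>
    if C.cRoot.holePos.isPrefixOf p then
      let q := p.drop C.cRoot.holePos.length
      if c.holePos.isPrefixOf q then
        match q.drop c.holePos.length with
        | [] => σ q
        | false :: rest => C.σLeft rest
        | true :: rest => C.σRight rest
      else σ q
    else C.σRoot p

/-- Two boughs of level `k` are compatible: same first idempotent value, and
every context making the first forward Ramseyan makes the second forward
Ramseyan. -/
def Compatible {M : Type} [Monoid M] (N k : ℕ) (c : CT M) (σ : List Bool → ℕ)
    (c' : CT M) (σ' : List Bool → ℕ) : Prop :=
  (∀ m, FirstIdem k c σ m ↔ FirstIdem k c' σ' m) ∧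
  ∀ C : BCtx M, FR id N (C.plugB c) (C.plugSplit c σ) →
    FR id N (C.plugB c') (C.plugSplit c' σ')

/-- A good bough with respect to the interpretation `I_P`. -/
def GoodBough {M : Type} [Monoid M] (P : Set (M × M × M)) (N k : ℕ)
    (C : BCtx M) (c : CT M) (σ : List Bool → ℕ) : Prop :=
  ∃ (c' : CT M) (σ' : List Bool → ℕ), IsBough N k c' σ' ∧
    Compatible N k c σ c' σ' ∧
  ∃ h : List Bool → List Bool,
    -- h is an embedding of graphs from I_P(C[B]) to I_P(C[H])
    (∀ x, (C.plugB c).IsLeafPos x → (C.plugB c').IsLeafPos (h x)) ∧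
    (∀ x y, (C.plugB c).IsLeafPos x → (C.plugB c).IsLeafPos y →
      h x = h y → x = y) ∧
    (∀ x y, (C.plugB c).IsLeafPos x → (C.plugB c).IsLeafPos y →
      (IPEdge id P (C.plugB c) x y ↔ IPEdge id P (C.plugB c') (h x) (h y))) ∧
    -- h is the identity on the leaves of C[□]
    (∀ p, ¬ (C.cRoot.holePos <+: p) → (C.plugB c).IsLeafPos p → h p = p) ∧
    (∀ q, (C.plugB c).IsLeafPos (C.cRoot.holePos ++ c.holePos ++ false :: q) →
      h (C.cRoot.holePos ++ c.holePos ++ false :: q) =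
        C.cRoot.holePos ++ c'.holePos ++ false :: q) ∧
    (∀ q, (C.plugB c).IsLeafPos (C.cRoot.holePos ++ c.holePos ++ true :: q) →
      h (C.cRoot.holePos ++ c.holePos ++ true :: q) =
        C.cRoot.holePos ++ c'.holePos ++ true :: q) ∧
    -- three consecutive blocks of H have no leaf in the image of h
    ∃ j₀ j₁ j₂ j₃, Backbone k c' σ' j₀ ∧ Backbone k c' σ' j₁ ∧
      Backbone k c' σ' j₂ ∧ Backbone k c' σ' j₃ ∧
      j₀ < j₁ ∧ j₁ < j₂ ∧ j₂ < j₃ ∧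
      (∀ j, Backbone k c' σ' j →
        ¬ (j₀ < j ∧ j < j₁) ∧ ¬ (j₁ < j ∧ j < j₂) ∧ ¬ (j₂ < j ∧ j < j₃)) ∧
      (∀ x, (C.plugB c').IsLeafPos x →
        (C.cRoot.holePos ++ c'.holePos.take j₀) <+: x →
        ¬ ((C.cRoot.holePos ++ c'.holePos.take j₃) <+: x) →
        ∀ y, (C.plugB c).IsLeafPos y → h y ≠ x)

/-! ### Classes of finite graphs -/

/-- A finite graph: a number of vertices together with a simple graph on them. -/
def FinGraph : Type := (n : ℕ) × SimpleGraph (Fin n)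

/-- Labelled induced-subgraph embedding between labelled graphs. -/
def LabEmbOn {VG VH X : Type} (le : X → X → Prop)
    (adjG : VG → VG → Prop) (adjH : VH → VH → Prop)
    (lG : VG → X) (lH : VH → X) : Prop :=
  ∃ f : VG → VH, Function.Injective f ∧
    (∀ u v, adjG u v ↔ adjH (f u) (f v)) ∧ ∀ v, le (lG v) (lH (f v))

/-- The `(X,le)`-labelled graphs with underlying graph in `Cl` are WQO under
labelled induced-subgraph embeddings. -/
def ClassWqoWith (Cl : Set FinGraph) (X : Type) (le : X → X → Prop) : Prop :=
  ∀ G : ℕ → FinGraph, (∀ i, G i ∈ Cl) → ∀ l : (i : ℕ) → Fin (G i).1 → X,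
    ∃ i j : ℕ, i < j ∧ LabEmbOn le (G i).2.Adj (G j).2.Adj (l i) (l j)

/-- 2-well-quasi-ordered class. -/
def TwoWqoClass (Cl : Set FinGraph) : Prop :=
  ∀ X : Type, Nonempty (X ≃ Fin 2) → ClassWqoWith Cl X Eq

/-- ∀-well-quasi-ordered class. -/
def ForallWqoClass (Cl : Set FinGraph) : Prop :=
  ∀ (X : Type) (le : X → X → Prop), Reflexive le → Transitive le → IsWqo le →
    ClassWqoWith Cl X le

/-- The graph `(V, adj)` is (isomorphic to) the interpretation of a tree. -/
def InImageOn {α M : Type} [Monoid M] (μ : α → M) (P : Set (M × M × M))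
    (V : Type) (adj : V → V → Prop) : Prop :=
  ∃ (T : BT α) (e : V → List Bool), Function.Injective e ∧
    (∀ v, T.IsLeafPos (e v)) ∧ (∀ p, T.IsLeafPos p → ∃ v, e v = p) ∧
    ∀ u v, adj u v ↔ IPEdge μ P T (e u) (e v)

/-- The image of the monoid interpretation `(μ, P)`, as a class of graphs. -/
def ImageClass {α M : Type} [Monoid M] (μ : α → M) (P : Set (M × M × M)) :
    Set FinGraph :=
  {G | InImageOn μ P (Fin G.1) G.2.Adj}

/-- Hereditary class (closed under induced subgraphs). -/
def HereditaryClass (Cl : Set FinGraph) : Prop :=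
  ∀ G ∈ Cl, ∀ H : FinGraph,
    (∃ f : Fin H.1 → Fin G.1, Function.Injective f ∧
      ∀ u v, H.2.Adj u v ↔ G.2.Adj (f u) (f v)) → H ∈ Cl


/-! ### Regular and periodic sequences of graphs -/

/-- The edge relation of the `r`-th graph `G^r` of the regular sequence
`(G₀, ℓ, C₀, F₀)`, on vertex set `Fin m × Fin r`. -/
def regAdj {m : ℕ} {Sig : Type} (G₀ : SimpleGraph (Fin m)) (ℓ : Fin m → Sig)
    (C₀ F₀ : Set (Sig × Sig)) (r : ℕ) :
    (Fin m × Fin r) → (Fin m × Fin r) → Prop := fun a b =>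
  (a.2 = b.2 ∧ G₀.Adj a.1 b.1) ∨
  ((a.2 : ℕ) + 1 = (b.2 : ℕ) ∧ (ℓ a.1, ℓ b.1) ∈ C₀) ∨
  ((b.2 : ℕ) + 1 = (a.2 : ℕ) ∧ (ℓ b.1, ℓ a.1) ∈ C₀) ∨
  ((a.2 : ℕ) + 1 < (b.2 : ℕ) ∧ (ℓ a.1, ℓ b.1) ∈ F₀) ∨
  ((b.2 : ℕ) + 1 < (a.2 : ℕ) ∧ (ℓ b.1, ℓ a.1) ∈ F₀)

/-- Labels of the vertices of `G^r`: the label in `Sig` together with the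
markers `▷` (first copy) and `◁` (last copy). -/
def regLabel {m : ℕ} {Sig : Type} (ℓ : Fin m → Sig) (r : ℕ) :
    Fin m × Fin r → Sig × Bool × Bool := fun a =>
  (ℓ a.1, decide ((a.2 : ℕ) = 0), decide ((a.2 : ℕ) = r - 1))

/-- The regular sequence `(G₀, ℓ, C₀, F₀)` is a regular antichain. -/
def IsRegularAntichain {m : ℕ} {Sig : Type} (G₀ : SimpleGraph (Fin m))
    (ℓ : Fin m → Sig) (C₀ F₀ : Set (Sig × Sig)) : Prop :=
  ∀ r s : ℕ, 1 ≤ r → 1 ≤ s → r ≠ s →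
    ¬ LabEmbOn Eq (regAdj G₀ ℓ C₀ F₀ r) (regAdj G₀ ℓ C₀ F₀ s)
        (regLabel ℓ r) (regLabel ℓ s)

/-- The arcs of the directed graph `H^r` associated with a regular sequence. -/
def regArc {m : ℕ} {Sig : Type} (G₀ : SimpleGraph (Fin m)) (ℓ : Fin m → Sig)
    (C₀ F₀ : Set (Sig × Sig)) (r : ℕ) :
    (Fin m × Fin r) → (Fin m × Fin r) → Prop := fun a b =>
  ¬ (regAdj G₀ ℓ C₀ F₀ r a b ↔ (ℓ a.1, ℓ b.1) ∈ F₀)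

/-- `i`-th letter of the infinite periodic word `w^ω`. -/
def perLetter {Sig : Type} {p : ℕ} (hp : 0 < p) (w : Fin p → Sig) (n : ℕ) : Sig :=
  w ⟨n % p, Nat.mod_lt n hp⟩

/-- The edge relation of the `r`-th graph `G_{w^r}` of the periodic sequence
`(w, C₀, F₀)`, on vertex set `Fin (r * p)`. -/
def perAdj {Sig : Type} {p : ℕ} (hp : 0 < p) (w : Fin p → Sig)
    (C₀ F₀ : Set (Sig × Sig)) (r : ℕ) :
    Fin (r * p) → Fin (r * p) → Prop := fun a b =>
  ((a : ℕ) + 1 = (b : ℕ) ∧ (perLetter hp w a, perLetter hp w b) ∈ C₀) ∨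
  ((b : ℕ) + 1 = (a : ℕ) ∧ (perLetter hp w b, perLetter hp w a) ∈ C₀) ∨
  ((a : ℕ) + 1 < (b : ℕ) ∧ (perLetter hp w a, perLetter hp w b) ∈ F₀) ∨
  ((b : ℕ) + 1 < (a : ℕ) ∧ (perLetter hp w b, perLetter hp w a) ∈ F₀)

/-- Labels of the vertices of `G_{w^r}`: unlabelled (`0`) except the first
vertex (`1`, for `▷`) and the last vertex (`2`, for `◁`). -/
def perLabel (n : ℕ) (i : Fin n) : ℕ :=
  if (i : ℕ) = 0 then 1 else if (i : ℕ) = n - 1 then 2 else 0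

/-- The periodic sequence `(w, C₀, F₀)` is a periodic antichain. -/
def IsPeriodicAntichain {Sig : Type} {p : ℕ} (hp : 0 < p) (w : Fin p → Sig)
    (C₀ F₀ : Set (Sig × Sig)) : Prop :=
  ∀ r s : ℕ, 1 ≤ r → 1 ≤ s → r ≠ s →
    ¬ LabEmbOn Eq (perAdj hp w C₀ F₀ r) (perAdj hp w C₀ F₀ s)
        (perLabel (r * p)) (perLabel (s * p))

/-! ### Existential first-order formulas over labelled graphs -/

/-- Quantifier-free formulas in the language of `Sig`-labelled graphs,
with variables in `α`. -/
inductive QF (Sig : Type) (α : Type) : Type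
  | tru : QF Sig α
  | eq : α → α → QF Sig α
  | edge : α → α → QF Sig α
  | lab : Sig → α → QF Sig α
  | not : QF Sig α → QF Sig α
  | and : QF Sig α → QF Sig α → QF Sig α
  | or : QF Sig α → QF Sig α → QF Sig α

/-- Evaluation of quantifier-free formulas in a labelled graph. -/
def QF.eval {Sig α V : Type} (adj : V → V → Prop) (lb : V → Sig)
    (ass : α → V) : QF Sig α → Prop
  | .tru => True
  | .eq i j => ass i = ass j
  | .edge i j => adj (ass i) (ass j)
  | .lab a i => lb (ass i) = a
  | .not φ => ¬ QF.eval adj lb ass φ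
  | .and φ ψ => QF.eval adj lb ass φ ∧ QF.eval adj lb ass ψ
  | .or φ ψ => QF.eval adj lb ass φ ∨ QF.eval adj lb ass ψ

/-- Existential first-order formulas: a block of `k` existential quantifiers
followed by a quantifier-free formula. -/
structure EF (Sig : Type) (α : Type) : Type where
  k : ℕ
  body : QF Sig (α ⊕ Fin k)

/-- Satisfaction of an existential formula in a labelled graph, under an
assignment of the free variables. -/
def EF.Realize {Sig α V : Type} (adj : V → V → Prop) (lb : V → Sig)
    (φ : EF Sig α) (ass : α → V) : Prop :=
  ∃ w : Fin φ.k → V, φ.body.eval adj lb (Sum.elim ass w)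

/-- Adjacency in the path graph on `n` vertices. -/
def pathAdj (n : ℕ) (i j : Fin n) : Prop :=
  (i : ℕ) + 1 = (j : ℕ) ∨ (j : ℕ) + 1 = (i : ℕ)


section AuxLemmas
variable {α : Type} {M : Type} [Monoid M]

lemma BT_sub_nil (t : BT α) : t.sub [] = t := by cases t <;> rfl

lemma BT_prodW_nil (μ : α → M) (t : BT α) : BT.prodW μ t [] = 1 := by cases t <;> rfl

lemma BT_sub_leaf (q : List Bool) : (BT.leaf : BT α).sub q = BT.leaf := by
  cases q with
  | nil => rfl
  | cons b q => rfl

lemma BT_prodW_leaf (μ : α → M) (q : List Bool) : BT.prodW μ (BT.leaf : BT α) q = 1 := by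
  cases q with
  | nil => rfl
  | cons b q => rfl

lemma BT_sub_append (t : BT α) (p q : List Bool) : t.sub (p ++ q) = (t.sub p).sub q := by
  induction p generalizing t with
  | nil => simp [BT_sub_nil]
  | cons b p ih =>
    cases t with
    | leaf => cases b <;> simp [BT.sub, BT_sub_leaf]
    | node a l c r => cases b <;> simp [BT.sub] <;> exact ih _

lemma BT_valid_append (t : BT α) (p q : List Bool) :
    t.valid (p ++ q) ↔ t.valid p ∧ (t.sub p).valid q := by
  induction p generalizing t with
  | nil => simp [BT.valid, BT_sub_nil]

  | cons b p ih =>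
    cases t with
    | leaf => cases b <;> simp [BT.valid]
    | node a l c r => cases b <;> simp [BT.valid, BT.sub] <;> exact ih _

lemma BT_prodW_append (μ : α → M) (t : BT α) (p q : List Bool) :
    BT.prodW μ t (p ++ q) = BT.prodW μ t p * BT.prodW μ (t.sub p) q := by
  induction p generalizing t with
  | nil => simp [BT.prodW, BT_sub_nil, BT_prodW_nil]
  | cons b p ih =>
    cases t with
    | leaf => cases b <;> simp [BT.prodW, BT_sub_leaf, BT_prodW_leaf, BT.sub]
    | node a l c r => cases b <;> simp [BT.prodW, BT.sub, ih, mul_assoc]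

lemma pi_self (μ : α → M) (t : BT α) (a : List Bool) : pi μ t a a = 1 := by
  unfold pi
  rw [List.drop_length]
  exact BT_prodW_nil μ _

lemma pi_trans (μ : α → M) (t : BT α) {x y z : List Bool} (hxy : x <+: y) (hyz : y <+: z) :
    pi μ t x z = pi μ t x y * pi μ t y z := by
  obtain ⟨r, rfl⟩ := hxy
  obtain ⟨s, rfl⟩ := hyz
  unfold pi
  have e1 : ((x ++ r) ++ s).drop x.length = r ++ s := by
    rw [List.append_assoc]; exact List.drop_left
  have e2 : (x ++ r).drop x.length = r := List.drop_left
  have e3 : ((x ++ r) ++ s).drop (x ++ r).length = s := List.drop_left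
  rw [e1, e2, e3, BT_prodW_append, BT_sub_append]

lemma BT_valid_of_prefix {t : BT α} {p q : List Bool} (hq : t.valid q) (hpq : p <+: q) :
    t.valid p := by
  obtain ⟨r, rfl⟩ := hpq
  exact ((BT_valid_append t p r).mp hq).1

lemma lcp_prefix_left : ∀ x y : List Bool, lcp x y <+: x := by
  intro x
  induction x with
  | nil => intro y; simp [lcp]
  | cons a x ih =>
    intro y
    cases y with
    | nil => simp [lcp]
    | cons b y =>
      by_cases hab : a = b
      · subst hab
        simp only [lcp, if_pos rfl]
        exact List.cons_prefix_cons.mpr ⟨rfl, ih y⟩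
      · simp [lcp, hab]

lemma lcp_prefix_right : ∀ x y : List Bool, lcp x y <+: y := by
  intro x
  induction x with
  | nil => intro y; simp [lcp]
  | cons a x ih =>
    intro y
    cases y with
    | nil => simp [lcp]
    | cons b y =>
      by_cases hab : a = b
      · subst hab
        simp only [lcp, if_pos rfl]
        exact List.cons_prefix_cons.mpr ⟨rfl, ih y⟩
      · simp [lcp, hab]

lemma lcp_comm : ∀ x y : List Bool, lcp x y = lcp y x := by
  intro x
  induction x with
  | nil => intro y; cases y <;> simp [lcp]
  | cons a x ih =>
    intro y
    cases y with
    | nil => simp [lcp]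
    | cons b y =>
      by_cases hab : a = b
      · subst hab; simp [lcp, ih y]
      · simp [lcp, hab, Ne.symm hab]

lemma prefix_lcp : ∀ u x y : List Bool, u <+: x → u <+: y → u <+: lcp x y := by
  intro u
  induction u with
  | nil => intro x y _ _; exact List.nil_prefix
  | cons c u ih =>
    intro x y h1 h2
    cases x with
    | nil => exact absurd h1 (by simp)
    | cons a x =>
      cases y with
      | nil => exact absurd h2 (by simp)
      | cons b y =>
        rw [List.cons_prefix_cons] at h1 h2
        obtain ⟨rfl, h1⟩ := h1
        obtain ⟨rfl, h2⟩ := h2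
        simp only [lcp, if_pos rfl]
        exact List.cons_prefix_cons.mpr ⟨rfl, ih _ _ h1 h2⟩

lemma lcp_append (p : List Bool) : ∀ x y, lcp (p ++ x) (p ++ y) = p ++ lcp x y := by
  induction p with
  | nil => intro x y; rfl
  | cons a p ih => intro x y; simp [lcp, ih]

lemma prefix_of_prefix_append {s u : List Bool} (v : List Bool) (hp : s <+: u ++ v)
    (hl : s.length ≤ u.length) : s <+: u := by
  have h2 : s = (u ++ v).take s.length := List.prefix_iff_eq_take.mp hp
  rw [List.take_append_of_le_length hl] at h2
  rw [h2]
  exact List.take_prefix _ _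

lemma bit_of_prefix {s t : List Bool} {c d : Bool} (h1 : s ++ [c] <+: t)
    (h2 : s ++ [d] <+: t) : c = d := by
  obtain ⟨r1, hr1⟩ := h1
  obtain ⟨r2, hr2⟩ := h2
  rw [← hr1] at hr2
  simp only [List.append_assoc, List.singleton_append] at hr2
  have h3 := List.append_cancel_left hr2
  injection h3 with h4 _
  exact h4.symm

lemma not_leftOf_split (u r₁ r₂ : List Bool) :
    ¬ LeftOf (u ++ true :: r₁) (u ++ false :: r₂) := by
  rintro ⟨q, h1, h2⟩
  rcases lt_trichotomy q.length u.length with hlt | heq | hgt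
  · have p1 : q ++ [false] <+: u := prefix_of_prefix_append _ h1 (by simp; omega)
    have p2 : q ++ [true] <+: u := prefix_of_prefix_append _ h2 (by simp; omega)
    simpa using bit_of_prefix p1 p2
  · have p1 : u ++ [true] <+: u ++ true :: r₁ := ⟨r₁, by simp⟩
    have heq2 : q ++ [false] = u ++ [true] := by
      rcases List.prefix_or_prefix_of_prefix h1 p1 with hh | hh
      · exact hh.eq_of_length (by simp [heq])
      · exact (hh.eq_of_length (by simp [heq])).symm
    have := congrArg (fun l => l.getLast?) heq2
    simp at this
  · have p2 : u ++ [false] <+: q := by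
      have pu : u ++ [false] <+: u ++ false :: r₂ := ⟨r₂, by simp⟩
      rcases List.prefix_or_prefix_of_prefix pu h2 with hh | hh
      · exact prefix_of_prefix_append _ hh (by simp; omega)
      · exfalso; have := hh.length_le; simp at this; omega
    have p1 : u ++ [true] <+: q := by
      have pu : u ++ [true] <+: u ++ true :: r₁ := ⟨r₁, by simp⟩
      rcases List.prefix_or_prefix_of_prefix pu h1 with hh | hh
      · exact prefix_of_prefix_append _ hh (by simp; omega)
      · exfalso; have := hh.length_le; simp at this; omega
    simpa using bit_of_prefix p2 p1

lemma leftOf_asymm {x y : List Bool} (hxy : LeftOf x y) : ¬ LeftOf y x := by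
  obtain ⟨p, hp1, hp2⟩ := hxy
  obtain ⟨r1, rfl⟩ := hp1
  obtain ⟨r2, rfl⟩ := hp2
  intro hyx
  simp only [List.append_assoc, List.singleton_append] at hyx
  exact not_leftOf_split p r2 r1 hyx

lemma leftOf_total {x y : List Bool} (hx : ¬ x <+: y) (hy : ¬ y <+: x) :
    LeftOf x y ∨ LeftOf y x := by
  obtain ⟨r, hr⟩ := lcp_prefix_left x y
  obtain ⟨s, hs⟩ := lcp_prefix_right x y
  cases r with
  | nil =>
    simp at hr
    exact absurd (by rw [← hr]; exact lcp_prefix_right x y) hx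
  | cons c r' =>
    cases s with
    | nil =>
      simp at hs
      exact absurd (by rw [← hs]; exact lcp_prefix_left x y) hy
    | cons d s' =>
      have hcd : c ≠ d := by
        rintro rfl
        have p1 : lcp x y ++ [c] <+: x := ⟨r', by simpa using hr⟩
        have p2 : lcp x y ++ [c] <+: y := ⟨s', by simpa using hs⟩
        have := (prefix_lcp _ _ _ p1 p2).length_le
        simp at this
      cases c with
      | false =>
        cases d with
        | true => exact Or.inl ⟨lcp x y, ⟨r', by simpa using hr⟩, ⟨s', by simpa using hs⟩⟩
        | false => exact absurd rfl hcd
      | true =>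
        cases d with
        | false => exact Or.inr ⟨lcp x y, ⟨s', by simpa using hs⟩, ⟨r', by simpa using hr⟩⟩
        | true => exact absurd rfl hcd

lemma leafPos_prefix_eq {t : BT α} {x y : List Bool} (hx : t.IsLeafPos x) (hy : t.valid y)
    (hp : x <+: y) : x = y := by
  obtain ⟨r, rfl⟩ := hp
  cases r with
  | nil => simp
  | cons c r' =>
    exfalso
    have h2 := ((BT_valid_append t x (c :: r')).mp hy).2
    rw [hx.2] at h2
    cases c <;> simp [BT.valid] at h2

end AuxLemmas

/-- If `h` is a marked gap-embedding between well-marked nested trees, then the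
graph interpreted from `T₁` restricted to its marked leaves is an induced
subgraph of the graph interpreted from `T₂` restricted to its marked leaves:
`h` restricted to marked leaves is injective and preserves both adjacency and
non-adjacency. -/
theorem marked_gapEmbedding_monotone (M : Type) [Monoid M] [Fintype M]
    (N : ℕ) (P : Set (M × M × M))
    (t₁ t₂ : BT M) (σ₁ σ₂ : List Bool → ℕ) (ρ₁ ρ₂ : List Bool → Mark)
    (hs₁ : IsSplit N t₁ σ₁) (hs₂ : IsSplit N t₂ σ₂)
    (hf₁ : FR id N t₁ σ₁) (hf₂ : FR id N t₂ σ₂)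
    (hw₁ : WellMarked N t₁ σ₁ ρ₁) (hw₂ : WellMarked N t₂ σ₂ ρ₂)
    (h : List Bool → List Bool)
    (hemb : IsMarkedGapEmb N t₁ σ₁ ρ₁ t₂ σ₂ ρ₂ h) :
    (∀ x, t₁.IsLeafPos x → ρ₁ x = .marked →
      t₂.IsLeafPos (h x) ∧ ρ₂ (h x) = .marked) ∧
    (∀ x y, t₁.IsLeafPos x → ρ₁ x = .marked → t₁.IsLeafPos y →
      ρ₁ y = .marked → h x = h y → x = y) ∧
    (∀ x y, t₁.IsLeafPos x → ρ₁ x = .marked → t₁.IsLeafPos y → ρ₁ y = .marked →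
      (IPEdge id P t₁ x y ↔ IPEdge id P t₂ (h x) (h y))) := by
  obtain ⟨⟨hval, hinj, hsp, hlcp, hlt, _hg1, _hg2⟩, hroot, hleafp, hmark, hlocal, _hnbr, hglue⟩ := hemb
  obtain ⟨hρroot, hρlcp, hwm⟩ := hw₁
  -- children of non-dummy nodes map to children in the same direction
  have hchild : ∀ a c, t₁.valid (a ++ [c]) → ρ₁ (a ++ [c]) ≠ Mark.dummy →
      h (a ++ [c]) = h a ++ [c] := by
    intro a c hv hnd
    obtain ⟨b', hb'⟩ := hglue a c hv hnd
    rcases eq_or_ne b' c with rfl | hne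
    · exact hb'
    · exfalso
      have hva : t₁.valid a := BT_valid_of_prefix hv ⟨[c], rfl⟩
      have hvsib : t₁.valid (a ++ [!c]) := by
        have h2 := ((BT_valid_append t₁ a [c]).mp hv).2
        rw [BT_valid_append]
        refine ⟨hva, ?_⟩
        cases hsub : t₁.sub a with
        | leaf => rw [hsub] at h2; cases c <;> simp [BT.valid] at h2
        | node m l m' r => cases c <;> simp [BT.valid]
      have hb'' : h (a ++ [c]) = h a ++ [!c] := by
        have hbc : b' = !c := by
          cases c <;> cases b' <;> first | rfl | exact absurd rfl hne
        rw [hb', hbc]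
      have hsph := hsp a (a ++ [!c]) hva hvsib ⟨⟨[!c], rfl⟩, by simp⟩
      obtain ⟨⟨rr, hrr⟩, hneq⟩ := hsph
      have e1 : lcp (a ++ [c]) (a ++ [!c]) = a := by
        rw [lcp_append]
        cases c <;> simp [lcp]
      have hlcp1 : h a = lcp (h (a ++ [c])) (h (a ++ [!c])) := by
        rw [← hlcp (a ++ [c]) (a ++ [!c]) hv hvsib, e1]
      cases rr with
      | nil => simp at hrr; exact hneq hrr
      | cons d rr' =>
        have hd : d = c := by
          by_contra hdne
          have hdb : d = !c := by
            cases c <;> cases d <;> first | rfl | exact absurd rfl hdne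
          subst hdb
          have p1 : h a ++ [!c] <+: h (a ++ [c]) := by rw [hb'']
          have p2 : h a ++ [!c] <+: h (a ++ [!c]) := ⟨rr', by simpa using hrr⟩
          have h3 := prefix_lcp _ _ _ p1 p2
          rw [← hlcp1] at h3
          have := h3.length_le
          simp at this
        rw [hd] at hrr
        cases c with
        | false =>
          have hl : LeftOf (a ++ [false]) (a ++ [true]) := ⟨a, ⟨[], by simp⟩, ⟨[], by simp⟩⟩
          have hl2 := hlt _ _ hv hvsib (by simpa using hl)
          rw [hb''] at hl2
          rw [← hrr] at hl2
          simp only [Bool.not_false] at hl2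
          exact not_leftOf_split (h a) [] rr' (by simpa using hl2)
        | true =>
          have hl : LeftOf (a ++ [false]) (a ++ [true]) := ⟨a, ⟨[], by simp⟩, ⟨[], by simp⟩⟩
          have hl2 := hlt _ _ hvsib hv (by simpa using hl)
          rw [hb''] at hl2
          rw [← hrr] at hl2
          simp only [Bool.not_true] at hl2
          exact not_leftOf_split (h a) rr' [] (by simpa using hl2)
  -- key lemma: products between marked nodes are preserved
  have key : ∀ n (a b : List Bool), b.length - a.length = n → a <+: b → t₁.valid b →
      ρ₁ a = Mark.marked → ρ₁ b = Mark.marked →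
      pi id t₁ a b = pi id t₂ (h a) (h b) := by
    intro n
    induction n using Nat.strong_induction_on with
    | _ n ih =>
      intro a b hn hab hvb hma hmb
      have hva : t₁.valid a := BT_valid_of_prefix hvb hab
      have hlen := hab.length_le
      by_cases h0 : b.length = a.length
      · have hEq : a = b := hab.eq_of_length h0.symm
        subst hEq
        rw [pi_self, pi_self]
      · by_cases h1 : b.length = a.length + 1
        · obtain ⟨r, rfl⟩ := hab
          have hr1 : r.length = 1 := by simp at h1; omega
          obtain ⟨c, rfl⟩ := List.length_eq_one_iff.mp hr1
          rw [hchild a c hvb (by simp [hmb])]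
          exact hlocal a c hvb (by rw [← hchild a c hvb (by simp [hmb])]; exact hval _ hvb)
        · have h2 : a.length + 2 ≤ b.length := by omega
          have hne : (Finset.Ioo a.length b.length).Nonempty :=
            ⟨a.length + 1, by simp [Finset.mem_Ioo]; omega⟩
          set k := (Finset.Ioo a.length b.length).inf' hne (fun i => σ₁ (b.take i)) with hk
          obtain ⟨i₀, hi₀mem, hi₀⟩ := Finset.exists_mem_eq_inf' hne (fun i => σ₁ (b.take i))
          set S := (Finset.Ioo a.length b.length).filter (fun i => σ₁ (b.take i) = k) with hSdef
          have hS : S.Nonempty := ⟨i₀, Finset.mem_filter.mpr ⟨hi₀mem, hi₀.symm⟩⟩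
          set j := S.min' hS with hjdef
          have hjS : j ∈ S := S.min'_mem hS
          have hjmem : j ∈ Finset.Ioo a.length b.length := (Finset.mem_filter.mp hjS).1
          have hjk : σ₁ (b.take j) = k := (Finset.mem_filter.mp hjS).2
          have hja : a.length < j := (Finset.mem_Ioo.mp hjmem).1
          have hjb : j < b.length := (Finset.mem_Ioo.mp hjmem).2
          set z := b.take j with hz
          have hzlen : z.length = j := by
            rw [hz, List.length_take]; omega
          have haz : a <+: z := by
            have ha2 : a = b.take a.length := List.prefix_iff_eq_take.mp hab
            have e : (b.take j).take a.length = b.take a.length := by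
              rw [List.take_take, min_eq_left (le_of_lt hja)]
            rw [ha2, hz, ← e]
            exact List.take_prefix _ _
          have hzb : z <+: b := List.take_prefix _ _
          have hvz : t₁.valid z := BT_valid_of_prefix hvb hzb
          have hk1 : 1 ≤ k := hjk ▸ (hs₁ z hvz).1
          have hkN : k ≤ N := hjk ▸ (hs₁ z hvz).2
          have hmin : ∀ i ∈ Finset.Ioo a.length b.length, k ≤ σ₁ (b.take i) :=
            fun i hi => Finset.inf'_le _ hi
          have gap1 : k < gap N σ₁ a z := by
            unfold gap
            split_ifs with hne2
            · rw [Finset.lt_inf'_iff]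
              intro i hi
              rw [hzlen] at hi
              obtain ⟨hi1, hi2⟩ := Finset.mem_Ioo.mp hi
              have ez : z.take i = b.take i := by
                rw [hz, List.take_take, min_eq_left (le_of_lt hi2)]
              rw [ez]
              have hkle : k ≤ σ₁ (b.take i) :=
                hmin i (Finset.mem_Ioo.mpr ⟨hi1, lt_trans hi2 hjb⟩)
              rcases lt_or_eq_of_le hkle with hlt' | heq'
              · exact hlt'
              · exfalso
                have hiS : i ∈ S := Finset.mem_filter.mpr
                  ⟨Finset.mem_Ioo.mpr ⟨hi1, lt_trans hi2 hjb⟩, heq'.symm⟩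
                have := S.min'_le i hiS
                omega
            · omega
          have gap2 : k ≤ gap N σ₁ z b := by
            unfold gap
            split_ifs with hne2
            · rw [Finset.le_inf'_iff]
              intro i hi
              rw [hzlen] at hi
              obtain ⟨hi1, hi2⟩ := Finset.mem_Ioo.mp hi
              exact hmin i (Finset.mem_Ioo.mpr ⟨lt_trans hja hi1, hi2⟩)
            · omega
          have hspaz : SP a z := ⟨haz, fun he => by rw [he] at hja; omega⟩
          have hspzb : SP z b := ⟨hzb, fun he => by rw [← he] at hjb; omega⟩
          obtain ⟨z₂, z₃, -, -, -, -, -, -, -, -, -, -, hzmark, -⟩ :=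
            hwm k hk1 hkN a b z hva hvb hvz hma hmb hspaz hspzb gap1 hjk gap2
          have e1 := ih (z.length - a.length) (by omega) a z rfl haz hvz hma hzmark
          have e2 := ih (b.length - z.length) (by omega) z b rfl hzb hvb hzmark hmb
          have hhaz : h a <+: h z := (hsp a z hva hvz hspaz).1
          have hhzb : h z <+: h b := (hsp z b hvz hvb hspzb).1
          rw [pi_trans id t₁ haz hzb, e1, e2, ← pi_trans id t₂ hhaz hhzb]
  refine ⟨?_, ?_, ?_⟩
  · intro x hx hm
    exact ⟨hleafp x hx, (hmark x hx.1) ▸ hm⟩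
  · intro x y hx _ hy _ hxy
    exact hinj x y hx.1 hy.1 hxy
  · intro x y hx hmx hy hmy
    by_cases hxy : x = y
    · subst hxy
      have hF1 : ¬ IPEdge id P t₁ x x := by
        rintro (⟨hl, -⟩ | ⟨hl, -⟩) <;> exact leftOf_asymm hl hl
      have hF2 : ¬ IPEdge id P t₂ (h x) (h x) := by
        rintro (⟨hl, -⟩ | ⟨hl, -⟩) <;> exact leftOf_asymm hl hl
      exact iff_of_false hF1 hF2
    · have hvx := hx.1
      have hvy := hy.1
      have hux : lcp x y <+: x := lcp_prefix_left x y
      have huy : lcp x y <+: y := lcp_prefix_right x y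
      have hvu : t₁.valid (lcp x y) := BT_valid_of_prefix hvx hux
      have hmu : ρ₁ (lcp x y) = Mark.marked := hρlcp x y hvx hvy hmx hmy
      have e0 : pi id t₁ [] (lcp x y) = pi id t₂ [] (lcp (h x) (h y)) := by
        have hkey := key _ [] (lcp x y) rfl (List.nil_prefix) hvu hρroot hmu
        rw [hroot, hlcp x y hvx hvy] at hkey
        exact hkey
      have ex : pi id t₁ (lcp x y) x = pi id t₂ (lcp (h x) (h y)) (h x) := by
        have hkey := key _ (lcp x y) x rfl hux hvx hmu hmx
        rw [hlcp x y hvx hvy] at hkey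
        exact hkey
      have ey : pi id t₁ (lcp x y) y = pi id t₂ (lcp (h x) (h y)) (h y) := by
        have hkey := key _ (lcp x y) y rfl huy hvy hmu hmy
        rw [hlcp x y hvx hvy] at hkey
        exact hkey
      have hnxy : ¬ x <+: y := fun hp => hxy (leafPos_prefix_eq hx hvy hp)
      have hnyx : ¬ y <+: x := fun hp => hxy (leafPos_prefix_eq hy hvx hp).symm
      constructor
      · rintro (⟨hl, hp⟩ | ⟨hl, hp⟩)
        · exact Or.inl ⟨hlt x y hvx hvy hl, by rw [← e0, ← ex, ← ey]; exact hp⟩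
        · refine Or.inr ⟨hlt y x hvy hvx hl, ?_⟩
          rw [lcp_comm (h y) (h x)]
          rw [lcp_comm y x] at hp
          rw [← e0, ← ey, ← ex]
          exact hp
      · rintro (⟨hl, hp⟩ | ⟨hl, hp⟩)
        · have hxy' : LeftOf x y := by
            rcases leftOf_total hnxy hnyx with h' | h'
            · exact h'
            · exact absurd (hlt y x hvy hvx h') (leftOf_asymm hl)
          refine Or.inl ⟨hxy', ?_⟩
          rw [e0, ex, ey]
          exact hp
        · have hyx' : LeftOf y x := by
            rcases leftOf_total hnxy hnyx with h' | h'
            · exact absurd (hlt x y hvx hvy h') (leftOf_asymm hl)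
            · exact h'
          refine Or.inr ⟨hyx', ?_⟩
          rw [lcp_comm y x, e0, ey, ex]
          rw [lcp_comm (h y) (h x)] at hp
          exact hp


end P2601
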